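/- Let $U$ be continuous, strictly increasing, $\delta>0$, and $Y$ strictly positive with $\mathbb{E}[|U(Y)|]<\infty$. With $C(Y,\delta,\beta)=\varphi_\beta(\eta(Y,\delta,\beta))$ for $\delta>1$ (where $\varphi_\beta(w)=U^{-1}(\frac{U(w)+\beta U(\delta w)}{1+\beta})$) and $C(Y,\delta,\beta)=\eta(Y,\delta,\beta)$ for $\delta\le1$: for $0<\beta_1<\beta_2$, we have $C(Y,\delta,\beta_1)\ge C(Y,\delta,\beta_2)$. -/

import Mathlib

open MeasureTheory

/-- The GDA certainty equivalent is nonincreasing in the disappointment-aversion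
parameter `β`, for every `δ > 0`. For `δ ≤ 1` the certainty equivalent is the GDA
value itself, while for `δ > 1` it is `φ_β(η)` with
`U(φ_β(w)) = (U(w) + β U(δ w)) / (1 + β)`. -/
theorem gda_certainty_equivalent_antitone_in_beta
    {Ω : Type*} [MeasurableSpace Ω] (μ : Measure Ω) [IsProbabilityMeasure μ]
    (U : ℝ → ℝ) (hUc : ContinuousOn U (Set.Ioi 0)) (hUm : StrictMonoOn U (Set.Ioi 0))
    (δ β₁ β₂ : ℝ) (hδ : 0 < δ) (hβ₁ : 0 < β₁) (hβ : β₁ < β₂)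
    (Y : Ω → ℝ) (hYmeas : Measurable Y) (hYpos : ∀ ω, 0 < Y ω)
    (hInt : Integrable (fun ω => U (Y ω)) μ)
    (η₁ η₂ C₁ C₂ : ℝ) (hη₁pos : 0 < η₁) (hη₂pos : 0 < η₂)
    (hC₁pos : 0 < C₁) (hC₂pos : 0 < C₂)
    (hη₁ : U η₁ = (∫ ω, U (Y ω) ∂μ) - β₁ * ∫ ω, max (U (δ * η₁) - U (Y ω)) 0 ∂μ)
    (hη₂ : U η₂ = (∫ ω, U (Y ω) ∂μ) - β₂ * ∫ ω, max (U (δ * η₂) - U (Y ω)) 0 ∂μ)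
    (hC₁ : if δ ≤ 1 then C₁ = η₁ else U C₁ = (U η₁ + β₁ * U (δ * η₁)) / (1 + β₁))
    (hC₂ : if δ ≤ 1 then C₂ = η₂ else U C₂ = (U η₂ + β₂ * U (δ * η₂)) / (1 + β₂)) :
    C₁ ≥ C₂ := by
  have hβ₂ : 0 < β₂ := hβ₁.trans hβ
  have hδη₁ : (0:ℝ) < δ * η₁ := mul_pos hδ hη₁pos
  have hδη₂ : (0:ℝ) < δ * η₂ := mul_pos hδ hη₂pos
  -- integrability of the disappointment terms
  have hIntM : ∀ c : ℝ, Integrable (fun ω => max (c - U (Y ω)) 0) μ := fun c =>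
    ((integrable_const c).sub hInt).pos_part
  have hMnonneg : ∀ c : ℝ, 0 ≤ ∫ ω, max (c - U (Y ω)) 0 ∂μ := fun c =>
    integral_nonneg fun ω => le_max_right _ _
  have hMmono : ∀ c₁ c₂ : ℝ, c₁ ≤ c₂ →
      (∫ ω, max (c₁ - U (Y ω)) 0 ∂μ) ≤ ∫ ω, max (c₂ - U (Y ω)) 0 ∂μ := fun c₁ c₂ h =>
    integral_mono (hIntM c₁) (hIntM c₂) fun ω =>
      max_le_max (by linarith) le_rfl
  -- η is antitone in β
  have hη21 : η₂ ≤ η₁ := by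
    by_contra h
    push_neg at h
    have hU : U η₁ < U η₂ := hUm (Set.mem_Ioi.mpr hη₁pos) (Set.mem_Ioi.mpr hη₂pos) h
    have hc : U (δ * η₁) ≤ U (δ * η₂) :=
      ((hUm.le_iff_le (Set.mem_Ioi.mpr hδη₁) (Set.mem_Ioi.mpr hδη₂)).mpr
        (mul_le_mul_of_nonneg_left h.le hδ.le))
    have hM12 := hMmono _ _ hc
    have h1 := mul_le_mul_of_nonneg_left hM12 hβ₁.le
    have h2 := mul_le_mul_of_nonneg_right hβ.le (hMnonneg (U (δ * η₂)))
    linarith [hη₁, hη₂]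
  by_cases hδ1 : δ ≤ 1
  · rw [if_pos hδ1] at hC₁ hC₂
    rw [hC₁, hC₂]
    exact hη21
  · rw [if_neg hδ1] at hC₁ hC₂
    have hc : U (δ * η₂) ≤ U (δ * η₁) :=
      (hUm.le_iff_le (Set.mem_Ioi.mpr hδη₂) (Set.mem_Ioi.mpr hδη₁)).mpr
        (mul_le_mul_of_nonneg_left hη21 hδ.le)
    -- rewrite c - M c as an integral of min
    have hminEq : ∀ c : ℝ, ∀ ω, c - max (c - U (Y ω)) 0 = min c (U (Y ω)) := by
      intro c ω
      rcases le_total c (U (Y ω)) with h | h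
      · rw [min_eq_left h, max_eq_right (by linarith : c - U (Y ω) ≤ 0)]; ring
      · rw [min_eq_right h, max_eq_left (by linarith : (0:ℝ) ≤ c - U (Y ω))]; ring
    have hIntmin : ∀ c : ℝ, Integrable (fun ω => min c (U (Y ω))) μ := by
      intro c
      exact (((integrable_const c).sub (hIntM c)).congr
        (Filter.Eventually.of_forall fun ω => hminEq c ω))
    have hNint : ∀ c : ℝ, c - (∫ ω, max (c - U (Y ω)) 0 ∂μ)
        = ∫ ω, min c (U (Y ω)) ∂μ := by
      intro c
      rw [← integral_congr_ae (Filter.Eventually.of_forall fun ω => hminEq c ω),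
        integral_sub (integrable_const c) (hIntM c), integral_const]
      simp
    have hN21 : U (δ * η₂) - (∫ ω, max (U (δ * η₂) - U (Y ω)) 0 ∂μ)
        ≤ U (δ * η₁) - ∫ ω, max (U (δ * η₁) - U (Y ω)) 0 ∂μ := by
      rw [hNint, hNint]
      exact integral_mono (hIntmin _) (hIntmin _) fun ω => min_le_min hc le_rfl
    have hN2E : U (δ * η₂) - (∫ ω, max (U (δ * η₂) - U (Y ω)) 0 ∂μ)
        ≤ ∫ ω, U (Y ω) ∂μ := by
      rw [hNint]
      exact integral_mono (hIntmin _) hInt fun ω => min_le_right _ _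
    have h1p : (0:ℝ) < 1 + β₁ := by linarith
    have h2p : (0:ℝ) < 1 + β₂ := by linarith
    have hUC : U C₂ ≤ U C₁ := by
      rw [hC₁, hC₂, div_le_div_iff₀ h2p h1p]
      nlinarith [mul_nonneg (sub_nonneg.mpr hβ.le) (sub_nonneg.mpr hN2E),
        mul_nonneg (mul_nonneg hβ₁.le h2p.le) (sub_nonneg.mpr hN21), hη₁, hη₂]
    exact (hUm.le_iff_le (Set.mem_Ioi.mpr hC₂pos) (Set.mem_Ioi.mpr hC₁pos)).mp hUC
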